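/- Let R be a Mori domain and let I be a divisorial ideal of R. Then the ring (I : I) is a Mori domain. -/

import Mathlib

/-- The image of an ideal of `A` in an `A`-algebra `K`, as an `A`-submodule of `K`. -/
def idealImage {A : Type*} (K : Type*) [CommRing A] [CommRing K] [Algebra A K]
    (J : Ideal A) : Submodule A K := Submodule.map (Algebra.linearMap A K) J

/-- `J` is a divisorial ideal with respect to the `A`-algebra `K` (which plays the role
of the fraction field of `A`): `J ≠ 0` and `J = (A : (A : J))`. -/
def IsDivisorialWrt {A : Type*} (K : Type*) [CommRing A] [CommRing K] [Algebra A K]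
    (J : Ideal A) : Prop :=
  J ≠ ⊥ ∧ idealImage K J = 1 / (1 / idealImage K J)

/-- `A` is a Mori domain, phrased via the `A`-algebra `K` playing the role of the
fraction field of `A`: every ascending chain of divisorial ideals stabilizes. -/
def IsMoriWrt (K : Type*) (A : Type*) [CommRing A] [CommRing K] [Algebra A K] : Prop :=
  ∀ f : ℕ → Ideal A, Monotone f → (∀ n, IsDivisorialWrt K (f n)) →
    ∃ N, ∀ n, N ≤ n → f n = f N

/-- The overring `(I : I)` of `R`, as a subalgebra of the fraction field. -/
noncomputable def endRing {R : Type*} [CommRing R] [IsDomain R] (I : Ideal R) :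
    Subalgebra R (FractionRing R) where
  carrier := {x | ∀ y ∈ idealImage (FractionRing R) I, x * y ∈ idealImage (FractionRing R) I}
  add_mem' := fun ha hb y hy => by rw [add_mul]; exact Submodule.add_mem _ (ha y hy) (hb y hy)
  mul_mem' := fun ha hb y hy => by rw [mul_assoc]; exact ha _ (hb y hy)
  algebraMap_mem' := fun r y hy => by rw [← Algebra.smul_def]; exact Submodule.smul_mem _ _ hy

section Aux

variable {R A : Type*} [CommSemiring R] [CommSemiring A] [Algebra R A]

lemma aux_le_one_div_one_div (N : Submodule R A) : N ≤ 1 / (1 / N) := by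
  intro x hx
  rw [Submodule.mem_div_iff_forall_mul_mem]
  intro y hy
  rw [mul_comm]
  exact hy x hx

lemma aux_div_anti {N M : Submodule R A} (h : N ≤ M) (X : Submodule R A) : X / M ≤ X / N :=
  fun _ hx y hy => hx y (h hy)

lemma aux_one_div_one_div_one_div (N : Submodule R A) : 1 / (1 / (1 / N)) = 1 / N :=
  le_antisymm (aux_div_anti (aux_le_one_div_one_div N) 1) (aux_le_one_div_one_div _)

lemma aux_div_div (X Y Z : Submodule R A) : X / Y / Z = X / (Y * Z) := by
  ext x
  simp only [Submodule.mem_div_iff_forall_mul_mem]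
  constructor
  · intro h w hw
    refine Submodule.mul_induction_on hw (fun y hy z hz => ?_) (fun a b ha hb => ?_)
    · rw [show x * (y * z) = x * z * y by ring]; exact h z hz y hy
    · rw [mul_add]; exact add_mem ha hb
  · intro h z hz y hy
    rw [show x * z * y = x * (y * z) by ring]
    exact h _ (Submodule.mul_mem_mul hy hz)

lemma aux_mul_one_div (U V Y : Submodule R A) (hUV : U * V = 1) :
    U * (1 / Y) = 1 / (V * Y) := by
  apply le_antisymm
  · rw [Submodule.mul_le]
    intro u hu x hx
    rw [Submodule.mem_div_iff_forall_mul_mem]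
    intro w hw
    refine Submodule.mul_induction_on hw (fun v hv y hy => ?_) (fun a b ha hb => ?_)
    · have h1 : u * v ∈ U * V := Submodule.mul_mem_mul hu hv
      have h2 : x * y ∈ (1 : Submodule R A) := hx y hy
      have := Submodule.mul_mem_mul h1 h2
      rw [hUV, one_mul] at this
      rw [show u * x * (v * y) = u * v * (x * y) by ring]
      exact this
    · rw [mul_add]; exact add_mem ha hb
  · have hstep : V * (1 / (V * Y)) ≤ 1 / Y := by
      rw [Submodule.le_div_iff_mul_le, mul_comm V (1 / (V * Y)), mul_assoc,
        mul_comm (1 / (V * Y)) (V * Y)]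
      exact Submodule.mul_one_div_le_one
    calc 1 / (V * Y) = U * V * (1 / (V * Y)) := by rw [hUV, one_mul]
      _ = U * (V * (1 / (V * Y))) := mul_assoc _ _ _
      _ ≤ U * (1 / Y) := mul_le_mul_right hstep _

end Aux

set_option maxHeartbeats 1000000 in
set_option synthInstance.maxHeartbeats 100000 in
theorem stmt_14 {R : Type*} [CommRing R] [IsDomain R]
    (hMori : IsMoriWrt (FractionRing R) R)
    (I : Ideal R) (hdiv : IsDivisorialWrt (FractionRing R) I) :
    IsMoriWrt (FractionRing R) (endRing I) := by
  classical
  set K := FractionRing R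
  set T := endRing I with hTdef
  intro f hmono hfdiv
  set 𝕀 : Submodule R K := idealImage K I with h𝕀def
  have h𝕀 : 𝕀 = 1 / (1 / 𝕀) := hdiv.2
  set T'' : Submodule R K := Subalgebra.toSubmodule T with hT''def
  have hTmem : ∀ x : K, x ∈ T'' ↔ ∀ y ∈ 𝕀, x * y ∈ 𝕀 := fun x => Iff.rfl
  have hT : T'' = 𝕀 / 𝕀 := by
    ext x
    rw [hTmem, Submodule.mem_div_iff_forall_mul_mem]
  -- T'' is of the form 1 / W
  set W : Submodule R K := (1 / 𝕀) * 𝕀 with hWdef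
  have hTW : T'' = 1 / W := by
    rw [hT, hWdef, ← aux_div_div 1 (1 / 𝕀) 𝕀, ← h𝕀]
  -- membership in (1 : Submodule T K) is membership in T''
  have hmemone : ∀ z : K, z ∈ (1 : Submodule T K) ↔ z ∈ T'' := by
    intro z
    rw [Submodule.mem_one]
    constructor
    · rintro ⟨t, rfl⟩
      exact t.2
    · intro hz
      exact ⟨⟨z, hz⟩, rfl⟩
  -- restrictScalars of a T-quotient
  have hres : ∀ N : Submodule T K,
      (((1 : Submodule T K) / N).restrictScalars R) = T'' / (N.restrictScalars R) := by
    intro N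
    ext x
    rw [Submodule.restrictScalars_mem, Submodule.mem_div_iff_forall_mul_mem,
      Submodule.mem_div_iff_forall_mul_mem]
    exact forall_congr' fun y => forall_congr' fun hy => hmemone _
  set M' : ℕ → Submodule R K :=
    fun n => (idealImage K (f n)).restrictScalars R with hM'def
  have hMle : ∀ m n, m ≤ n → M' m ≤ M' n := by
    intro m n hmn x hx
    obtain ⟨t, ht, rfl⟩ := hx
    exact ⟨t, hmono hmn ht, rfl⟩
  have hM'T : ∀ n, M' n ≤ T'' := by
    intro n x hx
    rcases hx with ⟨t, ht, rfl⟩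
    exact t.2
  -- each M' n is of the form 1 / Y
  have hM'div : ∀ n, ∃ Y : Submodule R K, M' n = 1 / Y := by
    intro n
    have h2 : idealImage K (f n) = 1 / (1 / idealImage K (f n)) := (hfdiv n).2
    have h3 : M' n = T'' / (T'' / M' n) := by
      have h4 := congrArg (Submodule.restrictScalars R) h2
      rw [hres, hres] at h4
      exact h4
    refine ⟨W * (T'' / M' n), ?_⟩
    calc M' n = T'' / (T'' / M' n) := h3
      _ = 1 / W / (T'' / M' n) := congrArg (· / (T'' / M' n)) hTW
      _ = 1 / (W * (T'' / M' n)) := aux_div_div 1 W _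
  -- choose a nonzero element of I
  obtain ⟨a, haI, ha0⟩ := Submodule.exists_mem_ne_zero_of_ne_bot hdiv.1
  set α : K := algebraMap R K a with hαdef
  have hα : α ≠ 0 := by
    simp only [hαdef, ne_eq, map_eq_zero_iff _ (IsFractionRing.injective R K)]
    exact ha0
  have hα𝕀 : α ∈ 𝕀 := ⟨a, haI, rfl⟩
  set U : Submodule R K := Submodule.span R {α} with hUdef
  set V : Submodule R K := Submodule.span R {α⁻¹} with hVdef
  have hUV : U * V = 1 := by
    rw [hUdef, hVdef, Submodule.span_mul_span, Set.singleton_mul_singleton,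
      mul_inv_cancel₀ hα, ← Submodule.one_eq_span]
  set G : ℕ → Submodule R K := fun n => U * M' n with hGdef
  have hG1 : ∀ n, G n ≤ 1 := by
    intro n
    show U * M' n ≤ 1
    rw [Submodule.mul_le]
    intro u hu x hx
    rw [hUdef, Submodule.mem_span_singleton] at hu
    obtain ⟨r, rfl⟩ := hu
    have hxT : x ∈ T'' := hM'T n hx
    have : x * α ∈ 𝕀 := (hTmem x).mp hxT α hα𝕀
    rcases this with ⟨b, hb, hbe⟩
    rw [smul_mul_assoc, mul_comm]
    rw [← hbe]
    rw [Submodule.mem_one]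
    exact ⟨r • b, by simp [Algebra.smul_def]⟩
  set g : ℕ → Ideal R := fun n => Submodule.comap (Algebra.linearMap R K) (G n) with hgdef
  have hmapg : ∀ n, idealImage K (g n) = G n := by
    intro n
    show Submodule.map (Algebra.linearMap R K) (Submodule.comap (Algebra.linearMap R K) (G n)) = G n
    rw [Submodule.map_comap_eq, inf_eq_right.mpr]
    rw [← Submodule.one_eq_range]
    exact hG1 n
  -- monotonicity
  have hgmono : Monotone g := by
    intro m n hmn
    apply Submodule.comap_mono
    exact mul_le_mul_right (hMle m n hmn) _
  -- divisoriality
  have hgdiv : ∀ n, IsDivisorialWrt K (g n) := by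
    intro n
    obtain ⟨t, htf, ht0⟩ := Submodule.exists_mem_ne_zero_of_ne_bot (hfdiv n).1
    have htM : (t : K) ∈ M' n := ⟨t, htf, rfl⟩
    have hαt : α * (t : K) ∈ G n := Submodule.mul_mem_mul (Submodule.mem_span_singleton_self α) htM
    have hαt0 : α * (t : K) ≠ 0 :=
      mul_ne_zero hα (by simpa using ht0)
    constructor
    · intro hbot
      have : G n = ⊥ := by rw [← hmapg n, hbot, idealImage, Submodule.map_bot]
      rw [this, Submodule.mem_bot] at hαt
      exact hαt0 hαt
    · rw [hmapg n]
      obtain ⟨Y, hY⟩ := hM'div n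
      have hGY : G n = 1 / (V * Y) := by
        show U * M' n = 1 / (V * Y)
        rw [hY, aux_mul_one_div U V Y hUV]
      rw [hGY, aux_one_div_one_div_one_div]
  -- apply Mori hypothesis
  obtain ⟨N, hN⟩ := hMori g hgmono hgdiv
  refine ⟨N, fun n hn => ?_⟩
  have hGeq : G n = G N := by rw [← hmapg n, ← hmapg N, hN n hn]
  have hrec : ∀ m, V * G m = M' m := by
    intro m
    show V * (U * M' m) = M' m
    rw [← mul_assoc, mul_comm V U, hUV, one_mul]
  have hM'eq : M' n = M' N := by rw [← hrec n, ← hrec N, hGeq]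
  have hMeq : idealImage K (f n) = idealImage K (f N) :=
    Submodule.restrictScalars_injective R T K hM'eq
  have hinj : Function.Injective (Algebra.linearMap T K) := by
    intro x y hxy
    exact Subtype.ext hxy
  exact Submodule.map_injective_of_injective hinj hMeq
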